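/- Suppose there exists a Q_B-set X ⊆ 2^ω of cardinality λ, where cf(λ) > ω. Then the following are equivalent: (1) there exist a set L of cardinality λ and a map representing a cardinality-preserving automorphism of P(L)/Ctble which is not trivial; (2) there exists a Q_B-set Y ⊆ 2^ω such that X △ Y is uncountable and for every Borel set B ⊆ 2^ω, |B ∩ X| + ℵ₀ = |B ∩ Y| + ℵ₀. -/

import Mathlib

open Cardinal Set

universe u

/-- `A ∼_κ B`: the symmetric difference of `A` and `B` has cardinality `< κ`. -/
def Sim {X : Type u} (κ : Cardinal.{u}) (A B : Set X) : Prop :=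
  #(↥(symmDiff A B)) < κ

/-- `π : P(X) → P(X)` represents an automorphism of `P(X)/I_κ`. -/
def IsAutoRep {X : Type u} (κ : Cardinal.{u}) (π : Set X → Set X) : Prop :=
  (∀ A B : Set X, Sim κ A B → Sim κ (π A) (π B)) ∧
  (∀ A B : Set X, Sim κ (π (A ∪ B)) (π A ∪ π B)) ∧
  (∀ A : Set X, Sim κ (π Aᶜ) (π A)ᶜ) ∧
  (∀ B : Set X, ∃ A : Set X, Sim κ (π A) B) ∧
  (∀ A B : Set X, Sim κ (π A) (π B) → Sim κ A B)

/-- `π` is trivial on `Z`: some `f : X → Z` has `π(A) ∼_κ f⁻¹(A)` for all `A ⊆ Z`. -/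
def TrivialOn {X : Type u} (κ : Cardinal.{u}) (π : Set X → Set X) (Z : Set X) : Prop :=
  ∃ f : X → X, (∀ x, f x ∈ Z) ∧ ∀ A : Set X, A ⊆ Z → Sim κ (π A) (f ⁻¹' A)

/-- `π` is trivial: some `f : X → X` has `π(A) ∼_κ f⁻¹(A)` for all `A ⊆ X`. -/
def IsTrivial {X : Type u} (κ : Cardinal.{u}) (π : Set X → Set X) : Prop :=
  ∃ f : X → X, ∀ A : Set X, Sim κ (π A) (f ⁻¹' A)

/-- `π` is cardinality-preserving. -/
def CardPres {X : Type u} (κ : Cardinal.{u}) (π : Set X → Set X) : Prop :=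
  ∀ A : Set X, ∃ B : Set X, #(↥B) = #(↥A) ∧ Sim κ (π A) B

/-- Cantor space `2^ω`. -/
abbrev Cantor : Type := ℕ → Bool

/-- `X ⊆ 2^ω` is a `Q_B`-set: every subset of `X` is the intersection of `X` with a
Borel subset of `2^ω`. -/
def IsQB (X : Set Cantor) : Prop :=
  ∀ Y : Set Cantor, Y ⊆ X →
    ∃ B : Set Cantor, @MeasurableSet Cantor (borel Cantor) B ∧ B ∩ X = Y

/-- countable symmetric difference -/
def CSim {α : Type} (A B : Set α) : Prop := (symmDiff A B).Countable

lemma sim_iff {α : Type} {A B : Set α} : Sim (Cardinal.aleph 1) A B ↔ CSim A B := by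
  rw [Sim, ← Cardinal.countable_iff_lt_aleph_one]; rfl

namespace CSim
variable {α : Type} {A B C D : Set α}

lemma refl (A : Set α) : CSim A A := by simp [CSim]

lemma symm (h : CSim A B) : CSim B A := by rwa [CSim, symmDiff_comm]

lemma trans (h1 : CSim A B) (h2 : CSim B C) : CSim A C :=
  (h1.union h2).mono (symmDiff_triangle A B C)

lemma of_countable (hA : A.Countable) (hB : B.Countable) : CSim A B :=
  (hA.union hB).mono (by rw [Set.symmDiff_def]; exact union_subset_union diff_subset diff_subset)

lemma compl (h : CSim A B) : CSim Aᶜ Bᶜ := by rwa [CSim, compl_symmDiff_compl]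

lemma union_congr (h1 : CSim A B) (h2 : CSim C D) : CSim (A ∪ C) (B ∪ D) := by
  refine (Set.Countable.union h1 h2).mono ?_
  intro x hx
  simp only [Set.mem_symmDiff, Set.mem_union] at *
  tauto

lemma iUnion {A B : ℕ → Set α} (h : ∀ n, CSim (A n) (B n)) :
    CSim (⋃ n, A n) (⋃ n, B n) := by
  refine (Set.countable_iUnion h).mono ?_
  intro x hx
  simp only [Set.mem_symmDiff, Set.mem_iUnion] at *
  obtain ⟨⟨n, hn⟩, h2⟩ | ⟨⟨n, hn⟩, h2⟩ := hx
  · exact ⟨n, Or.inl ⟨hn, fun h => h2 ⟨n, h⟩⟩⟩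
  · exact ⟨n, Or.inr ⟨hn, fun h => h2 ⟨n, h⟩⟩⟩

lemma diff_countable (h : CSim A B) : (A \ B).Countable :=
  h.mono (by rw [Set.symmDiff_def]; exact subset_union_left)

lemma countable (h : CSim A B) (hB : B.Countable) : A.Countable := by
  refine (h.diff_countable.union hB).mono ?_
  intro x hx
  by_cases hb : x ∈ B
  · exact Or.inr hb
  · exact Or.inl ⟨hx, hb⟩

lemma card_add_aleph0_le (h : CSim A B) : #A + ℵ₀ ≤ #B + ℵ₀ := by
  have hsub : A ⊆ B ∪ (symmDiff A B) := by
    intro x hx; by_cases hb : x ∈ B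
    · exact Or.inl hb
    · exact Or.inr (by simp [Set.mem_symmDiff]; tauto)
  have h1 : #A ≤ #B + ℵ₀ := by
    calc #A ≤ #(↥(B ∪ symmDiff A B)) := Cardinal.mk_le_mk_of_subset hsub
    _ ≤ #B + #(↥(symmDiff A B)) := Cardinal.mk_union_le _ _
    _ ≤ #B + ℵ₀ := add_le_add_right (Cardinal.le_aleph0_iff_set_countable.mpr h) _
  calc #A + ℵ₀ ≤ (#B + ℵ₀) + ℵ₀ := add_le_add_left h1 _
  _ = #B + ℵ₀ := by rw [add_assoc, Cardinal.aleph0_add_aleph0]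

lemma card_add_aleph0 (h : CSim A B) : #A + ℵ₀ = #B + ℵ₀ :=
  le_antisymm h.card_add_aleph0_le h.symm.card_add_aleph0_le

end CSim

lemma symmDiff_union_left {α : Type} (A B : Set α) : symmDiff (A ∪ B) B = A \ B := by
  ext x; simp [Set.mem_symmDiff]; tauto

lemma csim_empty_iff {α : Type} {A : Set α} : CSim A ∅ ↔ A.Countable := by
  unfold CSim
  rw [show (∅ : Set α) = ⊥ from rfl, symmDiff_bot]

lemma CSim.of_diffs {α : Type} {A B : Set α} (h1 : (A \ B).Countable)
    (h2 : (B \ A).Countable) : CSim A B := by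
  rw [CSim, Set.symmDiff_def]; exact h1.union h2

section Auto
variable {L : Type} {π : Set L → Set L}

lemma auto_congr (hπ : IsAutoRep (Cardinal.aleph 1) π) {A B : Set L} (h : CSim A B) :
    CSim (π A) (π B) := sim_iff.mp (hπ.1 A B (sim_iff.mpr h))

lemma auto_union (hπ : IsAutoRep (Cardinal.aleph 1) π) (A B : Set L) :
    CSim (π (A ∪ B)) (π A ∪ π B) := sim_iff.mp (hπ.2.1 A B)

lemma auto_compl (hπ : IsAutoRep (Cardinal.aleph 1) π) (A : Set L) :
    CSim (π Aᶜ) (π A)ᶜ := sim_iff.mp (hπ.2.2.1 A)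

lemma auto_surj (hπ : IsAutoRep (Cardinal.aleph 1) π) (B : Set L) :
    ∃ A : Set L, CSim (π A) B := (hπ.2.2.2.1 B).imp (fun _ h => sim_iff.mp h)

lemma auto_inj (hπ : IsAutoRep (Cardinal.aleph 1) π) {A B : Set L}
    (h : CSim (π A) (π B)) : CSim A B := sim_iff.mp (hπ.2.2.2.2 A B (sim_iff.mpr h))

lemma auto_univ (hπ : IsAutoRep (Cardinal.aleph 1) π) : CSim (π univ) univ := by
  obtain ⟨A0, hA0⟩ := auto_surj hπ ∅
  have h1 : CSim (π univ) (π A0 ∪ π A0ᶜ) := by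
    have := auto_union hπ A0 A0ᶜ
    rwa [Set.union_compl_self] at this
  refine h1.trans ?_
  have h2 : CSim (π A0 ∪ π A0ᶜ) (∅ ∪ (π A0)ᶜ) := hA0.union_congr (auto_compl hπ A0)
  refine h2.trans ?_
  rw [Set.empty_union]
  have := hA0.compl
  rwa [Set.compl_empty] at this

lemma auto_empty (hπ : IsAutoRep (Cardinal.aleph 1) π) : (π ∅).Countable := by
  rw [← csim_empty_iff]
  have h1 : CSim (π univᶜ) (π univ)ᶜ := auto_compl hπ univ
  rw [Set.compl_univ] at h1
  refine h1.trans ?_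
  have := (auto_univ hπ).compl
  rwa [Set.compl_univ] at this

lemma auto_mono (hπ : IsAutoRep (Cardinal.aleph 1) π) {A B : Set L} (h : A ⊆ B) :
    (π A \ π B).Countable := by
  have hu : A ∪ B = B := Set.union_eq_right.mpr h
  have h1 := auto_union hπ A B
  rw [hu] at h1
  rw [← symmDiff_union_left (π A) (π B)]
  exact (h1.symm : CSim (π A ∪ π B) (π B))

lemma auto_mono_rev (hπ : IsAutoRep (Cardinal.aleph 1) π) {A B : Set L}
    (h : (π A \ π B).Countable) : (A \ B).Countable := by
  have h1 : CSim (π (A ∪ B)) (π B) := by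
    refine (auto_union hπ A B).trans ?_
    rw [CSim, symmDiff_union_left]; exact h
  have := auto_inj hπ h1
  rwa [CSim, symmDiff_union_left] at this

lemma auto_countable (hπ : IsAutoRep (Cardinal.aleph 1) π) {A : Set L}
    (h : A.Countable) : (π A).Countable := by
  have : CSim (π A) (π ∅) := auto_congr hπ (csim_empty_iff.mpr h)
  exact this.countable (auto_empty hπ)

lemma auto_countable_rev (hπ : IsAutoRep (Cardinal.aleph 1) π) {A : Set L}
    (h : (π A).Countable) : A.Countable := by
  rw [← csim_empty_iff]
  exact auto_inj hπ (csim_empty_iff.mpr h |>.trans (csim_empty_iff.mpr (auto_empty hπ)).symm)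

lemma auto_mono_csim (hπ : IsAutoRep (Cardinal.aleph 1) π) {A B : Set L}
    (h : (A \ B).Countable) : (π A \ π B).Countable := by
  have h1 : CSim (A ∪ B) B := by rw [CSim, symmDiff_union_left]; exact h
  have h2 : CSim (π (A ∪ B)) (π B) := auto_congr hπ h1
  have h3 : CSim (π A ∪ π B) (π B) := (auto_union hπ A B).symm.trans h2
  rw [← symmDiff_union_left (π A) (π B)]
  exact h3

lemma auto_iUnion (hπ : IsAutoRep (Cardinal.aleph 1) π) (A : ℕ → Set L) :
    CSim (π (⋃ n, A n)) (⋃ n, π (A n)) := by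
  obtain ⟨C, hC⟩ := auto_surj hπ (⋃ n, π (A n))
  have hAnC : ∀ n, (A n \ C).Countable := by
    intro n
    refine auto_mono_rev hπ ?_
    refine Set.Countable.mono ?_ (hC.symm.diff_countable)
    intro x hx
    exact ⟨Set.mem_iUnion.mpr ⟨n, hx.1⟩, hx.2⟩
  have hUC : ((⋃ n, A n) \ C).Countable := by
    refine Set.Countable.mono ?_ (Set.countable_iUnion hAnC)
    intro x hx
    obtain ⟨n, hn⟩ := Set.mem_iUnion.mp hx.1
    exact Set.mem_iUnion.mpr ⟨n, hn, hx.2⟩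
  refine CSim.of_diffs ?_ ?_
  · refine Set.Countable.mono ?_ ((auto_mono_csim hπ hUC).union hC.diff_countable)
    intro x hx
    by_cases hc : x ∈ π C
    · exact Or.inr ⟨hc, hx.2⟩
    · exact Or.inl ⟨hx.1, hc⟩
  · refine Set.Countable.mono ?_
      (Set.countable_iUnion (fun n => auto_mono hπ (Set.subset_iUnion A n)))
    intro x hx
    obtain ⟨n, hn⟩ := Set.mem_iUnion.mp hx.1
    exact Set.mem_iUnion.mpr ⟨n, hn, hx.2⟩

end Auto

section CantorBorel

lemma borel_cantor_eq : borel Cantor = (inferInstance : MeasurableSpace Cantor) :=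
  BorelSpace.measurable_eq.symm

/-- basic cylinder -/
def Cyl (n : ℕ) : Set Cantor := {f | f n = true}

lemma set_bool_cases (U : Set Bool) : U = ∅ ∨ U = {true} ∨ U = {false} ∨ U = Set.univ := by
  by_cases ht : true ∈ U <;> by_cases hf : false ∈ U
  · right; right; right; ext x; cases x <;> simp [ht, hf]
  · right; left; ext x; cases x <;> simp [ht, hf] <;> tauto
  · right; right; left; ext x; cases x <;> simp [ht, hf] <;> tauto
  · left; ext x; cases x <;> simp [ht, hf] <;> tauto

lemma cantor_generateFrom :
    (inferInstance : MeasurableSpace Cantor) =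
      MeasurableSpace.generateFrom
        {s : Set Cantor | ∃ (n : ℕ) (U : Set Bool), s = (fun f => f n) ⁻¹' U} := by
  apply le_antisymm
  · show MeasurableSpace.pi ≤ _
    refine iSup_le fun n => ?_
    intro s hs
    obtain ⟨U, -, hU⟩ := hs
    exact MeasurableSpace.measurableSet_generateFrom ⟨n, U, hU.symm⟩
  · refine MeasurableSpace.generateFrom_le fun t ht => ?_
    obtain ⟨n, U, rfl⟩ := ht
    exact (measurable_pi_apply n) (U.to_countable.measurableSet)

lemma borel_induction (p : Set Cantor → Prop)
    (hcyl : ∀ n : ℕ, p (Cyl n))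
    (hempty : p ∅) (hcompl : ∀ t, p t → p tᶜ)
    (hunion : ∀ s : ℕ → Set Cantor, (∀ n, p (s n)) → p (⋃ n, s n))
    {B : Set Cantor} (hB : @MeasurableSet Cantor (borel Cantor) B) : p B := by
  rw [borel_cantor_eq, cantor_generateFrom] at hB
  refine MeasurableSpace.generateFrom_induction _ (fun s _ => p s) ?_ hempty
    (fun t _ h => hcompl t h) (fun s _ h => hunion s h) B hB
  rintro t ⟨n, U, rfl⟩ -
  rcases set_bool_cases U with rfl | rfl | rfl | rfl
  · exact hempty
  · have : (fun f : Cantor => f n) ⁻¹' {true} = Cyl n := by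
      ext f; simp [Cyl]
    rw [this]; exact hcyl n
  · have : (fun f : Cantor => f n) ⁻¹' {false} = (Cyl n)ᶜ := by
      ext f; simp [Cyl]
    rw [this]; exact hcompl _ (hcyl n)
  · have : (fun f : Cantor => f n) ⁻¹' Set.univ = (∅ : Set Cantor)ᶜ := by simp
    rw [Set.preimage_univ, ← Set.compl_empty]
    exact hcompl _ hempty

lemma countable_borel {B : Set Cantor} (h : B.Countable) :
    @MeasurableSet Cantor (borel Cantor) B := by
  rw [borel_cantor_eq]
  exact h.measurableSet

lemma borel_compl {B : Set Cantor} (h : @MeasurableSet Cantor (borel Cantor) B) :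
    @MeasurableSet Cantor (borel Cantor) Bᶜ := h.compl

lemma borel_union {B C : Set Cantor} (hB : @MeasurableSet Cantor (borel Cantor) B)
    (hC : @MeasurableSet Cantor (borel Cantor) C) :
    @MeasurableSet Cantor (borel Cantor) (B ∪ C) := hB.union hC

lemma borel_diff {B C : Set Cantor} (hB : @MeasurableSet Cantor (borel Cantor) B)
    (hC : @MeasurableSet Cantor (borel Cantor) C) :
    @MeasurableSet Cantor (borel Cantor) (B \ C) := hB.diff hC

lemma borel_symmDiff {B C : Set Cantor} (hB : @MeasurableSet Cantor (borel Cantor) B)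
    (hC : @MeasurableSet Cantor (borel Cantor) C) :
    @MeasurableSet Cantor (borel Cantor) (symmDiff B C) := by
  rw [Set.symmDiff_def]
  exact (hB.diff hC).union (hC.diff hB)

end CantorBorel

lemma countable_image_iff' {α β : Type} {f : α → β} (hf : Function.Injective f)
    {s : Set α} : (f '' s).Countable ↔ s.Countable :=
  ⟨fun h => (h.preimage hf).mono (Set.subset_preimage_image f s), fun h => h.image f⟩

lemma uncountable_split {α : Type} {A : Set α} (h : ¬ A.Countable) :
    ∃ A1 : Set α, A1 ⊆ A ∧ ¬ A1.Countable ∧ ¬ (A \ A1).Countable := by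
  have hinf : ℵ₀ ≤ #(↥A) := by
    by_contra hc
    exact h (Cardinal.le_aleph0_iff_set_countable.mp (le_of_lt (not_le.mp hc)))
  have hsum : #(↥A ⊕ ↥A) = #(↥A) := by
    simp only [Cardinal.mk_sum, Cardinal.lift_id]
    exact Cardinal.add_eq_self hinf
  obtain ⟨gg⟩ := Cardinal.eq.mp hsum
  set φ : ↥A → α := fun a => ↑(gg (Sum.inl a)) with hφ
  set ψ : ↥A → α := fun a => ↑(gg (Sum.inr a)) with hψ
  have hφi : Function.Injective φ := fun a b hab => by
    have := gg.injective (Subtype.ext hab)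
    simpa using this
  have hψi : Function.Injective ψ := fun a b hab => by
    have := gg.injective (Subtype.ext hab)
    simpa using this
  have hAc : ¬ Countable ↥A := by
    rwa [← Set.countable_coe_iff] at h
  refine ⟨Set.range φ, ?_, ?_, ?_⟩
  · rintro _ ⟨a, rfl⟩; exact (gg (Sum.inl a)).2
  · intro hc
    rw [← Set.image_univ] at hc
    have := (countable_image_iff' hφi).mp hc
    rw [Set.countable_univ_iff] at this
    exact hAc this
  · intro hc
    have hsub : Set.range ψ ⊆ A \ Set.range φ := by
      rintro _ ⟨a, rfl⟩
      refine ⟨(gg (Sum.inr a)).2, ?_⟩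
      rintro ⟨b, hb⟩
      have := gg.injective (Subtype.ext hb)
      simp at this
    have h2 : (Set.range ψ).Countable := hc.mono hsub
    rw [← Set.image_univ] at h2
    have := (countable_image_iff' hψi).mp h2
    rw [Set.countable_univ_iff] at this
    exact hAc this

theorem forward_dir (lam : Cardinal.{0}) (hlam0 : ℵ₀ < lam)
    (X : Set Cantor) (hX : IsQB X) (hXcard : #(↥X) = lam)
    (L : Type) (π : Set L → Set L) (hL : #L = lam)
    (hauto : IsAutoRep (Cardinal.aleph 1) π) (hcp : CardPres (Cardinal.aleph 1) π)
    (hnt : ¬ IsTrivial (Cardinal.aleph 1) π) :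
    ∃ Y : Set Cantor, IsQB Y ∧ ¬ (symmDiff X Y).Countable ∧
        ∀ B : Set Cantor, @MeasurableSet Cantor (borel Cantor) B →
          #(↥(B ∩ X)) + ℵ₀ = #(↥(B ∩ Y)) + ℵ₀ := by
  classical
  obtain ⟨e⟩ : Nonempty (L ≃ ↥X) := Cardinal.eq.mp (hL.trans hXcard.symm)
  -- coding subsets of L by Borel sets
  have hsub : ∀ A : Set L, (Subtype.val '' (e '' A)) ⊆ X := by
    rintro A _ ⟨x, -, rfl⟩; exact x.2
  choose cB hcB1 hcB2 using fun A : Set L => hX _ (hsub A)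
  -- decoding
  set SB : Set Cantor → Set L := fun B => {l | (↑(e l) : Cantor) ∈ B} with hSB
  have hSBcB : ∀ A : Set L, SB (cB A) = A := by
    intro A
    ext l
    simp only [hSB, Set.mem_setOf_eq]
    constructor
    · intro hl
      have : (↑(e l) : Cantor) ∈ cB A ∩ X := ⟨hl, (e l).2⟩
      rw [hcB2] at this
      obtain ⟨x, hx, hxe⟩ := this
      obtain ⟨l', hl', rfl⟩ := hx
      have : e l' = e l := Subtype.ext hxe
      rwa [← e.injective this]
    · intro hl
      have : (↑(e l) : Cantor) ∈ cB A ∩ X := by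
        rw [hcB2]; exact ⟨e l, ⟨l, hl, rfl⟩, rfl⟩
      exact this.1
  have hSBcompl : ∀ B : Set Cantor, SB Bᶜ = (SB B)ᶜ := fun B => rfl
  have hSBunion : ∀ s : ℕ → Set Cantor, SB (⋃ n, s n) = ⋃ n, SB (s n) := by
    intro s; ext l; simp [hSB]
  -- the map y and the set Y
  set y : L → Cantor := fun l n => decide (l ∈ π (SB (Cyl n))) with hy
  set Y : Set Cantor := Set.range y with hY
  -- key: π (SB B) ≈ y ⁻¹' B for Borel B
  have hkey : ∀ B : Set Cantor, @MeasurableSet Cantor (borel Cantor) B →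
      CSim (π (SB B)) (y ⁻¹' B) := by
    intro B hB
    refine borel_induction (fun B => CSim (π (SB B)) (y ⁻¹' B)) ?_ ?_ ?_ ?_ hB
    · intro n
      show CSim (π (SB (Cyl n))) (y ⁻¹' (Cyl n))
      have : π (SB (Cyl n)) = y ⁻¹' (Cyl n) := by
        ext l
        simp only [Set.mem_preimage, hy, Cyl, Set.mem_setOf_eq, decide_eq_true_eq]
        exact decide_eq_true_iff.symm
      rw [this]; exact CSim.refl _
    · show CSim (π (SB ∅)) (y ⁻¹' ∅)
      have h1 : SB ∅ = ∅ := rfl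
      rw [h1, Set.preimage_empty]
      exact csim_empty_iff.mpr (auto_empty hauto)
    · intro t ht
      show CSim (π (SB tᶜ)) (y ⁻¹' tᶜ)
      have ht' : CSim (π (SB t)) (y ⁻¹' t) := ht
      rw [hSBcompl, Set.preimage_compl]
      exact (auto_compl hauto (SB t)).trans ht'.compl
    · intro s hs
      show CSim (π (SB (⋃ n, s n))) (y ⁻¹' ⋃ n, s n)
      rw [hSBunion, Set.preimage_iUnion]
      exact (auto_iUnion hauto _).trans (CSim.iUnion hs)
  -- fibers of y are countable
  have hfib : ∀ c : Cantor, (y ⁻¹' {c}).Countable := by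
    intro c
    by_contra hF
    set F : Set L := y ⁻¹' {c} with hFdef
    obtain ⟨A, hA⟩ := auto_surj hauto F
    have hAunc : ¬ A.Countable := by
      intro hAc
      exact hF ((hA.symm.countable) (auto_countable hauto hAc))
    obtain ⟨A1, hA1A, hA1unc, hA2unc⟩ := uncountable_split hAunc
    -- two pieces, each sent to an almost-subset of F
    have hsubF : ∀ A' : Set L, A' ⊆ A → (π A' \ F).Countable := by
      intro A' hA'
      have h1 := auto_mono hauto hA'
      have h2 := hA.diff_countable
      refine (h1.union h2).mono ?_
      intro x hx
      by_cases hc2 : x ∈ π A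
      · exact Or.inr ⟨hc2, hx.2⟩
      · exact Or.inl ⟨hx.1, hc2⟩
    -- π A1 is uncountable and almost inside F
    have hπA1unc : ¬ (π A1).Countable := fun hc => hA1unc (auto_countable_rev hauto hc)
    have h3 : CSim (π A1) (y ⁻¹' (cB A1)) := by
      have := hkey (cB A1) (hcB1 A1)
      rwa [hSBcB] at this
    -- find a point of F in y ⁻¹' (cB A1)
    have hcinB1 : c ∈ cB A1 := by
      have huncint : ¬ ((π A1 ∩ F) \ (π A1 \ y ⁻¹' (cB A1))).Countable := by
        intro hc2
        apply hπA1unc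
        refine (((hsubF A1 hA1A).union h3.diff_countable).union hc2).mono ?_
        intro x hx
        by_cases h1 : x ∈ F
        · by_cases h2 : x ∈ y ⁻¹' (cB A1)
          · exact Or.inr ⟨⟨hx, h1⟩, fun hh => hh.2 h2⟩
          · exact Or.inl (Or.inr ⟨hx, h2⟩)
        · exact Or.inl (Or.inl ⟨hx, h1⟩)
      have hne : ((π A1 ∩ F) \ (π A1 \ y ⁻¹' (cB A1))).Nonempty := by
        rw [Set.nonempty_iff_ne_empty]
        intro hh
        exact huncint (by rw [hh]; exact Set.countable_empty)
      obtain ⟨l0, hl0⟩ := hne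
      have hl0F : l0 ∈ F := hl0.1.2
      have hl0B : l0 ∈ y ⁻¹' (cB A1) := by
        by_contra hc3
        exact hl0.2 ⟨hl0.1.1, hc3⟩
      have : y l0 = c := hl0F
      rwa [← this]
    have hFsub : F ⊆ y ⁻¹' (cB A1) := by
      intro l hl
      have : y l = c := hl
      simp only [Set.mem_preimage, this]
      exact hcinB1
    have hFdiff : (F \ π A1).Countable := by
      refine h3.symm.diff_countable.mono ?_
      intro x hx
      exact ⟨hFsub hx.1, hx.2⟩
    -- now A \ A1 gives a contradiction
    have hπA2F : (π (A \ A1) \ F).Countable := hsubF _ diff_subset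
    have hdisj : (π (A \ A1) ∩ π A1).Countable := by
      have hss : A \ A1 ⊆ A1ᶜ := fun x hx => hx.2
      have h4 := auto_mono hauto hss
      have h5 := auto_compl hauto A1
      refine (h4.union h5.diff_countable).mono ?_
      intro x hx
      by_cases hc4 : x ∈ π A1ᶜ
      · exact Or.inr ⟨hc4, fun hh => hh hx.2⟩
      · exact Or.inl ⟨hx.1, hc4⟩
    have : (π (A \ A1)).Countable := by
      refine ((hπA2F.union hFdiff).union hdisj).mono ?_
      intro x hx
      by_cases h1 : x ∈ π A1
      · exact Or.inr ⟨hx, h1⟩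
      · by_cases h2 : x ∈ F
        · exact Or.inl (Or.inr ⟨h2, h1⟩)
        · exact Or.inl (Or.inl ⟨hx, h2⟩)
    exact hA2unc (auto_countable_rev hauto this)
  -- preimages of countable sets are countable
  have hpre : ∀ S : Set Cantor, S.Countable → (y ⁻¹' S).Countable := by
    intro S hS
    have : y ⁻¹' S = ⋃ c ∈ S, y ⁻¹' {c} := by
      ext l; simp
    rw [this]
    exact hS.biUnion fun c _ => hfib c
  refine ⟨Y, ?_, ?_, ?_⟩
  · -- Y is a Q_B-set
    intro Z hZY
    obtain ⟨A, hA⟩ := auto_surj hauto (y ⁻¹' Z)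
    have hA' : CSim (y ⁻¹' (cB A)) (y ⁻¹' Z) := by
      have := hkey (cB A) (hcB1 A)
      rw [hSBcB] at this
      exact this.symm.trans hA
    set B := cB A with hBdef
    have hpreSD : y ⁻¹' (symmDiff B Z) = symmDiff (y ⁻¹' B) (y ⁻¹' Z) := by
      ext l; simp [Set.mem_symmDiff]
    have hsd : (symmDiff (B ∩ Y) Z).Countable := by
      have himg : (symmDiff (B ∩ Y) Z) ⊆ y '' (y ⁻¹' (symmDiff B Z)) := by
        intro c hc
        rw [Set.mem_symmDiff] at hc
        rcases hc with ⟨⟨hcB, hcY⟩, hcZ⟩ | ⟨hcZ, hcBY⟩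
        · obtain ⟨l, rfl⟩ := hcY
          exact ⟨l, by rw [hpreSD, Set.mem_symmDiff]; exact Or.inl ⟨hcB, hcZ⟩, rfl⟩
        · obtain ⟨l, rfl⟩ := hZY hcZ
          have hcB : y l ∉ B := fun hh => hcBY ⟨hh, ⟨l, rfl⟩⟩
          exact ⟨l, by rw [hpreSD, Set.mem_symmDiff]; exact Or.inr ⟨hcZ, hcB⟩, rfl⟩
      refine (Set.Countable.image ?_ y).mono himg
      rw [hpreSD]
      exact hA'
    have hc1 : (Z \ B).Countable := hsd.mono (by
      intro c hc
      rw [Set.mem_symmDiff]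
      exact Or.inr ⟨hc.1, fun hh => hc.2 hh.1⟩)
    have hc2 : ((B ∩ Y) \ Z).Countable := hsd.mono (by
      intro c hc
      rw [Set.mem_symmDiff]
      exact Or.inl ⟨hc.1, hc.2⟩)
    refine ⟨(B ∪ (Z \ B)) \ ((B ∩ Y) \ Z), ?_, ?_⟩
    · exact borel_diff (borel_union (hcB1 A) (countable_borel hc1)) (countable_borel hc2)
    · ext c
      constructor
      · rintro ⟨⟨hc3, hc4⟩, hcY⟩
        by_contra hcZ
        rcases hc3 with hcB | ⟨hcZ', _⟩
        · exact hc4 ⟨⟨hcB, hcY⟩, hcZ⟩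
        · exact hcZ hcZ'
      · intro hcZ
        have hcY : c ∈ Y := hZY hcZ
        refine ⟨⟨?_, fun hh => hh.2 hcZ⟩, hcY⟩
        by_cases hcB : c ∈ B
        · exact Or.inl hcB
        · exact Or.inr ⟨hcZ, hcB⟩
  · -- X ∆ Y is uncountable
    intro hctble
    apply hnt
    set f : L → L := fun l => if h : y l ∈ X then e.symm ⟨y l, h⟩ else l with hf
    have hE : ({l : L | y l ∉ X}).Countable := by
      refine (hpre (symmDiff X Y) hctble).mono ?_
      intro l hl
      rw [Set.mem_preimage, Set.mem_symmDiff]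
      exact Or.inr ⟨⟨l, rfl⟩, hl⟩
    refine ⟨f, fun A => sim_iff.mpr ?_⟩
    have h1 : CSim (π A) (y ⁻¹' (cB A)) := by
      have := hkey (cB A) (hcB1 A)
      rwa [hSBcB] at this
    refine h1.trans ?_
    refine hE.mono ?_
    intro l hl
    rw [Set.mem_symmDiff] at hl
    by_contra hlE
    simp only [Set.mem_setOf_eq, not_not] at hlE
    have hfl : f l = e.symm ⟨y l, hlE⟩ := by rw [hf]; simp [hlE]
    have hmem : f l ∈ A ↔ y l ∈ cB A := by
      have : f l ∈ SB (cB A) ↔ (↑(e (f l)) : Cantor) ∈ cB A := Iff.rfl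
      rw [hSBcB] at this
      rw [this, hfl, e.apply_symm_apply]
    rcases hl with ⟨hl1, hl2⟩ | ⟨hl1, hl2⟩
    · exact hl2 (hmem.mpr hl1)
    · exact hl2 (hmem.mp hl1)
  · -- cardinality condition
    intro B hB
    -- #(SB B) = #(B ∩ X)
    have hmk : #(↥(SB B)) = #(↥(B ∩ X)) := by
      have h1 : SB B = e ⁻¹' (Subtype.val ⁻¹' B) := rfl
      rw [h1, Cardinal.mk_preimage_of_injective_of_subset_range e (Subtype.val ⁻¹' B)
        e.injective (by rw [Equiv.range_eq_univ]; exact Set.subset_univ _)]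
      have h2 : (Subtype.val ⁻¹' B : Set ↥X) = Subtype.val ⁻¹' (B ∩ X) := by
        ext x; simp [x.2]
      rw [h2, Cardinal.mk_preimage_of_injective_of_subset_range _ _ Subtype.val_injective
        (by rw [Subtype.range_coe]; exact Set.inter_subset_right)]
    obtain ⟨B', hB'card, hB'sim⟩ := hcp (SB B)
    have hsim : CSim (y ⁻¹' B) B' := (hkey B hB).symm.trans (sim_iff.mp hB'sim)
    have hcard1 : #(↥(y ⁻¹' B)) + ℵ₀ = #(↥(B ∩ X)) + ℵ₀ := by
      rw [hsim.card_add_aleph0, hB'card, hmk]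
    -- #(B ∩ Y) vs #(y ⁻¹' B)
    have himg : B ∩ Y = y '' (y ⁻¹' B) := by
      ext c
      constructor
      · rintro ⟨hcB, l, rfl⟩; exact ⟨l, hcB, rfl⟩
      · rintro ⟨l, hl, rfl⟩; exact ⟨hl, l, rfl⟩
    have hle1 : #(↥(B ∩ Y)) ≤ #(↥(y ⁻¹' B)) := by
      rw [himg]; exact Cardinal.mk_image_le
    have hle2 : #(↥(y ⁻¹' B)) ≤ #(↥(B ∩ Y)) * ℵ₀ := by
      have hcover : y ⁻¹' B = ⋃ c ∈ (B ∩ Y), y ⁻¹' {c} := by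
        ext l
        simp only [Set.mem_preimage, Set.mem_iUnion, Set.mem_singleton_iff]
        constructor
        · intro hl; exact ⟨y l, ⟨hl, ⟨l, rfl⟩⟩, rfl⟩
        · rintro ⟨c, ⟨hc, -⟩, rfl⟩; exact hc
      rw [hcover]
      refine (Cardinal.mk_biUnion_le _ _).trans ?_
      refine mul_le_mul' le_rfl ?_
      refine ciSup_le' fun c => ?_
      exact Cardinal.le_aleph0_iff_set_countable.mpr (hfib _)
    apply le_antisymm
    · rw [← hcard1]
      have h5 : ℵ₀ ≤ #(↥(B ∩ Y)) + ℵ₀ := le_add_self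
      calc #(↥(y ⁻¹' B)) + ℵ₀ ≤ (#(↥(B ∩ Y)) * ℵ₀) + ℵ₀ := add_le_add_left hle2 _
      _ ≤ (#(↥(B ∩ Y)) + ℵ₀) * (#(↥(B ∩ Y)) + ℵ₀) + (#(↥(B ∩ Y)) + ℵ₀) := by
          refine add_le_add (mul_le_mul' le_self_add le_add_self) le_add_self
      _ = #(↥(B ∩ Y)) + ℵ₀ := by
          rw [Cardinal.mul_eq_self h5, Cardinal.add_eq_self h5]
    · rw [← hcard1]
      exact add_le_add_left hle1 _

lemma cyl_borel (n : ℕ) : @MeasurableSet Cantor (borel Cantor) (Cyl n) := by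
  rw [borel_cantor_eq]
  have h : Cyl n = (fun f : Cantor => f n) ⁻¹' {true} := by ext f; simp [Cyl]
  rw [h]
  exact (measurable_pi_apply n) (Set.to_countable _).measurableSet

lemma countable_iff_card_add_aleph0 {α : Type} {s : Set α} :
    s.Countable ↔ #(↥s) + ℵ₀ = ℵ₀ := by
  constructor
  · intro h
    exact Cardinal.add_eq_right le_rfl (Cardinal.le_aleph0_iff_set_countable.mpr h)
  · intro h
    rw [← Cardinal.le_aleph0_iff_set_countable, ← h]
    exact self_le_add_right _ _

lemma symmDiff_inter_distrib {α : Type} (S T X : Set α) :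
    (symmDiff S T) ∩ X = symmDiff (S ∩ X) (T ∩ X) := by
  ext x; simp [Set.mem_symmDiff]; tauto

theorem backward_dir (lam : Cardinal.{0}) (hlam0 : ℵ₀ < lam)
    (X : Set Cantor) (hX : IsQB X) (hXcard : #(↥X) = lam)
    (Y : Set Cantor) (hYQ : IsQB Y) (hYd : ¬ (symmDiff X Y).Countable)
    (hcard : ∀ B : Set Cantor, @MeasurableSet Cantor (borel Cantor) B →
      #(↥(B ∩ X)) + ℵ₀ = #(↥(B ∩ Y)) + ℵ₀) :
    ∃ (L : Type) (π : Set L → Set L), #L = lam ∧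
      IsAutoRep (Cardinal.aleph 1) π ∧ CardPres (Cardinal.aleph 1) π ∧
      ¬ IsTrivial (Cardinal.aleph 1) π := by
  classical
  have hlamX : ℵ₀ ≤ lam := hlam0.le
  -- #Y = lam
  have hYcard : #(↥Y) = lam := by
    have h1 := hcard Set.univ (by rw [borel_cantor_eq]; exact MeasurableSet.univ)
    rw [Set.univ_inter, Set.univ_inter, hXcard, Cardinal.add_eq_left hlamX hlamX] at h1
    have hY0 : ℵ₀ ≤ #(↥Y) := by
      by_contra hc
      push_neg at hc
      have : lam ≤ ℵ₀ := by
        rw [h1]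
        calc #(↥Y) + ℵ₀ ≤ ℵ₀ + ℵ₀ := add_le_add_left hc.le _
        _ = ℵ₀ := Cardinal.aleph0_add_aleph0
      exact absurd this (not_le.mpr hlam0)
    rw [Cardinal.add_eq_left hY0 hY0] at h1
    exact h1.symm
  obtain ⟨g⟩ : Nonempty (↥X ≃ ↥Y) := Cardinal.eq.mp (hXcard.trans hYcard.symm)
  set vg : ↥X → Cantor := fun x => ↑(g x) with hvg
  have hvg_inj : Function.Injective vg :=
    fun a b hab => g.injective (Subtype.ext hab)
  have hvg_range : Set.range vg = Y := by
    ext c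
    constructor
    · rintro ⟨x, rfl⟩; exact (g x).2
    · intro hc
      exact ⟨g.symm ⟨c, hc⟩, by simp [hvg]⟩
  -- coding
  have hsub : ∀ A : Set ↥X, (Subtype.val '' A) ⊆ X := by
    rintro A _ ⟨x, -, rfl⟩; exact x.2
  choose cB hcB1 hcB2 using fun A : Set ↥X => hX _ (hsub A)
  set pull : Set Cantor → Set ↥X := fun S => vg ⁻¹' S with hpull
  set π : Set ↥X → Set ↥X := fun A => pull (cB A) with hπ
  -- pulling back countable iff countable trace on Y
  have hpull_ctble : ∀ S : Set Cantor, (pull S).Countable ↔ (S ∩ Y).Countable := by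
    intro S
    constructor
    · intro h
      have h2 := h.image vg
      rwa [hpull, Set.image_preimage_eq_inter_range, hvg_range] at h2
    · intro h
      have h2 : pull S = vg ⁻¹' (S ∩ Y) := by
        ext x
        exact ⟨fun hh => ⟨hh, (g x).2⟩, fun hh => hh.1⟩
      rw [h2]
      exact h.preimage hvg_inj
  -- Borel sets meet X countably iff they meet Y countably
  have hXY_ctble : ∀ B : Set Cantor, @MeasurableSet Cantor (borel Cantor) B →
      ((B ∩ X).Countable ↔ (B ∩ Y).Countable) := by
    intro B hB
    rw [countable_iff_card_add_aleph0, countable_iff_card_add_aleph0, hcard B hB]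
  -- trace of coded set on X
  have hvalcompl : ∀ A : Set ↥X, (Subtype.val '' Aᶜ : Set Cantor) = X \ Subtype.val '' A := by
    intro A
    ext c
    constructor
    · rintro ⟨x, hx, rfl⟩
      exact ⟨x.2, fun ⟨x', hx', hx'e⟩ => hx (Subtype.ext hx'e ▸ hx')⟩
    · rintro ⟨hcX, hc⟩
      exact ⟨⟨c, hcX⟩, fun hh => hc ⟨⟨c, hcX⟩, hh, rfl⟩, rfl⟩
  -- master: the pull of any Borel set agreeing with A on X is CSim to π A
  have hmaster : ∀ (A : Set ↥X) (B : Set Cantor), @MeasurableSet Cantor (borel Cantor) B →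
      B ∩ X = Subtype.val '' A → CSim (π A) (pull B) := by
    intro A B hB hBX
    have h1 : symmDiff (π A) (pull B) = pull (symmDiff (cB A) B) :=
      (Set.preimage_symmDiff _ _).symm
    rw [CSim, h1, hpull_ctble]
    rw [← hXY_ctble _ (borel_symmDiff (hcB1 A) hB)]
    rw [symmDiff_inter_distrib, hcB2, hBX, symmDiff_self]
    exact Set.countable_empty
  -- CSim (π A) (π A') ↔ CSim A A'
  have hiff : ∀ A A' : Set ↥X, CSim (π A) (π A') ↔ CSim A A' := by
    intro A A'
    have h1 : symmDiff (π A) (π A') = pull (symmDiff (cB A) (cB A')) :=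
      (Set.preimage_symmDiff _ _).symm
    have h2 : (symmDiff (cB A) (cB A')) ∩ X = Subtype.val '' (symmDiff A A') := by
      rw [symmDiff_inter_distrib, hcB2, hcB2, ← Set.image_symmDiff Subtype.val_injective]
    rw [CSim, h1, hpull_ctble, ← hXY_ctble _ (borel_symmDiff (hcB1 A) (hcB1 A')), h2,
      countable_image_iff' Subtype.val_injective]
    rfl
  refine ⟨↥X, π, hXcard, ⟨?_, ?_, ?_, ?_, ?_⟩, ?_, ?_⟩
  · -- (i) congruence
    intro A A' h
    rw [sim_iff] at *
    exact (hiff A A').mpr h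
  · -- (ii) union
    intro A A'
    rw [sim_iff]
    have hu : π A ∪ π A' = pull (cB A ∪ cB A') := (Set.preimage_union).symm
    rw [hu]
    refine hmaster (A ∪ A') (cB A ∪ cB A') (borel_union (hcB1 A) (hcB1 A')) ?_
    rw [Set.union_inter_distrib_right, hcB2, hcB2, Set.image_union]
  · -- (iii) complement
    intro A
    rw [sim_iff]
    have hc : (π A)ᶜ = pull (cB A)ᶜ := rfl
    rw [hc]
    refine hmaster Aᶜ (cB A)ᶜ (borel_compl (hcB1 A)) ?_
    rw [hvalcompl, ← hcB2]
    ext c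
    simp only [Set.mem_inter_iff, Set.mem_compl_iff, Set.mem_diff]
    tauto
  · -- (iv) surjectivity
    intro C
    have hsubY : (Subtype.val '' (g '' C)) ⊆ Y := by
      rintro _ ⟨x, -, rfl⟩; exact x.2
    obtain ⟨B, hB, hBY⟩ := hYQ _ hsubY
    refine ⟨{x : ↥X | (↑x : Cantor) ∈ B}, ?_⟩
    rw [sim_iff]
    have hval : B ∩ X = Subtype.val '' {x : ↥X | (↑x : Cantor) ∈ B} := by
      ext c
      constructor
      · rintro ⟨hcB, hcX⟩; exact ⟨⟨c, hcX⟩, hcB, rfl⟩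
      · rintro ⟨x, hx, rfl⟩; exact ⟨hx, x.2⟩
    have h1 : CSim (π {x : ↥X | (↑x : Cantor) ∈ B}) (pull B) := hmaster _ B hB hval
    have h2 : pull B = C := by
      ext x
      simp only [hpull, Set.mem_preimage]
      constructor
      · intro hx
        have : (↑(g x) : Cantor) ∈ B ∩ Y := ⟨hx, (g x).2⟩
        rw [hBY] at this
        obtain ⟨x', hx', hx'e⟩ := this
        obtain ⟨x'', hx'', rfl⟩ := hx'
        exact g.injective (Subtype.ext hx'e) ▸ hx''
      · intro hx
        have : (↑(g x) : Cantor) ∈ B ∩ Y := by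
          rw [hBY]; exact ⟨g x, ⟨x, hx, rfl⟩, rfl⟩
        exact this.1
    rw [← h2]
    exact h1
  · -- (v) injectivity
    intro A A' h
    rw [sim_iff] at *
    exact (hiff A A').mp h
  · -- cardinality preserving
    intro A
    by_cases hA : A.Countable
    · have hπc : (π A).Countable := by
        refine (hpull_ctble (cB A)).mpr ?_
        rw [← hXY_ctble _ (hcB1 A), hcB2, countable_image_iff' Subtype.val_injective]
        exact hA
      obtain ⟨B', hB'⟩ : ∃ B' : Set ↥X, #(↥B') = #(↥A) :=
        Cardinal.le_mk_iff_exists_set.mp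
          (le_trans (Cardinal.le_aleph0_iff_set_countable.mpr hA) (hXcard ▸ hlamX))
      refine ⟨B', hB', ?_⟩
      rw [sim_iff]
      refine CSim.of_countable hπc ?_
      rw [← Cardinal.le_aleph0_iff_set_countable, hB']
      exact Cardinal.le_aleph0_iff_set_countable.mpr hA
    · have hAinf : ℵ₀ ≤ #(↥A) := by
        by_contra hc
        exact hA (Cardinal.le_aleph0_iff_set_countable.mp (not_le.mp hc).le)
      have h1 : #(↥(π A)) = #(↥(cB A ∩ Y)) := by
        have h2 : π A = vg ⁻¹' (cB A ∩ Y) := by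
          ext x
          exact ⟨fun hh => ⟨hh, (g x).2⟩, fun hh => hh.1⟩
        rw [h2]
        exact Cardinal.mk_preimage_of_injective_of_subset_range vg _ hvg_inj
          (by rw [hvg_range]; exact Set.inter_subset_right)
      have h3 : #(↥(cB A ∩ Y)) + ℵ₀ = #(↥A) + ℵ₀ := by
        rw [← hcard _ (hcB1 A), hcB2, Cardinal.mk_image_eq Subtype.val_injective]
      rw [Cardinal.add_eq_left hAinf hAinf] at h3
      have h4 : #(↥(π A)) = #(↥A) := by
        rw [h1]
        by_cases hc : #(↥(cB A ∩ Y)) ≤ ℵ₀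
        · exfalso
          have : #(↥A) ≤ ℵ₀ := by
            rw [← h3]
            calc #(↥(cB A ∩ Y)) + ℵ₀ ≤ ℵ₀ + ℵ₀ := add_le_add_left hc _
            _ = ℵ₀ := Cardinal.aleph0_add_aleph0
          exact hA (Cardinal.le_aleph0_iff_set_countable.mp this)
        · rw [← Cardinal.add_eq_left (not_le.mp hc).le (not_le.mp hc).le]
          exact h3
      exact ⟨π A, h4, sim_iff.mpr (CSim.refl _)⟩
  · -- nontrivial
    rintro ⟨f, hf⟩
    -- on a co-countable set, val ∘ f = vg
    have hAn : ∀ n : ℕ, CSim (pull (Cyl n)) (f ⁻¹' {x : ↥X | (↑x : Cantor) ∈ Cyl n}) := by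
      intro n
      have hval : Cyl n ∩ X = Subtype.val '' {x : ↥X | (↑x : Cantor) ∈ Cyl n} := by
        ext c
        constructor
        · rintro ⟨hcB, hcX⟩; exact ⟨⟨c, hcX⟩, hcB, rfl⟩
        · rintro ⟨x, hx, rfl⟩; exact ⟨hx, x.2⟩
      have h1 : CSim (π {x : ↥X | (↑x : Cantor) ∈ Cyl n}) (pull (Cyl n)) :=
        hmaster _ (Cyl n) (cyl_borel n) hval
      exact h1.symm.trans (sim_iff.mp (hf _))
    set E : Set ↥X := ⋃ n, symmDiff (pull (Cyl n)) (f ⁻¹' {x : ↥X | (↑x : Cantor) ∈ Cyl n})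
      with hE
    have hEc : E.Countable := Set.countable_iUnion fun n => hAn n
    have hagree : ∀ x : ↥X, x ∉ E → (↑(g x) : Cantor) = ↑(f x) := by
      intro x hx
      funext n
      have hn : x ∉ symmDiff (pull (Cyl n)) (f ⁻¹' {x : ↥X | (↑x : Cantor) ∈ Cyl n}) :=
        fun hh => hx (Set.mem_iUnion.mpr ⟨n, hh⟩)
      rw [Set.mem_symmDiff] at hn
      push_neg at hn
      have h1 : (↑(g x) : Cantor) n = true ↔ (↑(f x) : Cantor) n = true := by
        constructor
        · intro hh
          by_contra hc
          exact hc (hn.1 hh)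
        · intro hh
          by_contra hc
          exact hc (hn.2 hh)
      cases h2 : (↑(g x) : Cantor) n
      · cases h3 : (↑(f x) : Cantor) n
        · rfl
        · exact absurd (h1.mpr h3) (by rw [h2]; simp)
      · exact (h1.mp h2).symm
    -- Y \ X is countable
    have hYX : (Y \ X).Countable := by
      have hsub2 : Y \ X ⊆ (fun x : ↥X => (↑(g x) : Cantor)) '' E := by
        intro c hc
        set x := g.symm ⟨c, hc.1⟩ with hx
        have hgx : (↑(g x) : Cantor) = c := by rw [hx]; simp
        by_cases hxE : x ∈ E
        · exact ⟨x, hxE, hgx⟩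
        · exfalso
          have := hagree x hxE
          rw [hgx] at this
          exact hc.2 (this ▸ (f x).2)
      exact (hEc.image _).mono hsub2
    -- X \ Y is countable
    have hXY : (X \ Y).Countable := by
      set A' : Set ↥X := {x : ↥X | (↑x : Cantor) ∉ Y} with hA'
      have hfA' : (f ⁻¹' A').Countable := by
        refine hEc.mono ?_
        intro x hx
        by_contra hxE
        have := hagree x hxE
        exact hx (this ▸ (g x).2)
      have hπA' : (π A').Countable := by
        have h1 : CSim (π A') (f ⁻¹' A') := sim_iff.mp (hf A')
        exact h1.countable hfA'
      have h2 : (cB A' ∩ Y).Countable := (hpull_ctble (cB A')).mp hπA'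
      have h3 : (cB A' ∩ X).Countable := (hXY_ctble _ (hcB1 A')).mpr h2
      rw [hcB2] at h3
      refine h3.mono ?_
      intro c hc
      exact ⟨⟨c, hc.1⟩, hc.2, rfl⟩
    apply hYd
    refine (hXY.union hYX).mono ?_
    intro c hc
    rw [Set.mem_symmDiff] at hc
    rcases hc with h | h
    · exact Or.inl h
    · exact Or.inr h

/-- Given a `Q_B`-set `X` of cardinality `λ` with `cf(λ) > ω`, there is a nontrivial
cardinality-preserving automorphism of `P(λ)/Ctble` iff there is a `Q_B`-set `Y` with
`X △ Y` uncountable which meets every Borel set in the same cardinality as `X` does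
(modulo `ℵ₀`). -/
theorem stmt12 (lam : Cardinal.{0}) (hlam : ℵ₀ < lam.ord.cof)
    (X : Set Cantor) (hX : IsQB X) (hXcard : #(↥X) = lam) :
    (∃ (L : Type) (π : Set L → Set L), #L = lam ∧
        IsAutoRep (Cardinal.aleph 1) π ∧ CardPres (Cardinal.aleph 1) π ∧
        ¬ IsTrivial (Cardinal.aleph 1) π) ↔
    (∃ Y : Set Cantor, IsQB Y ∧ ¬ (symmDiff X Y).Countable ∧
        ∀ B : Set Cantor, @MeasurableSet Cantor (borel Cantor) B →
          #(↥(B ∩ X)) + ℵ₀ = #(↥(B ∩ Y)) + ℵ₀) := by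
  have hlam0 : ℵ₀ < lam := lt_of_lt_of_le hlam (Ordinal.cof_ord_le lam)
  constructor
  · rintro ⟨L, π, hL, hauto, hcp, hnt⟩
    exact forward_dir lam hlam0 X hX hXcard L π hL hauto hcp hnt
  · rintro ⟨Y, hYQ, hYd, hcard⟩
    exact backward_dir lam hlam0 X hX hXcard Y hYQ hYd hcard
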